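/- Let H ∈ ℝ^{m×m} be positive definite, let b, g ∈ ℝᵐ, let ν ≥ 1, let 0 < ε_N ≤ 0.05, and let η₁ > 0 and η₂ = η₁·(1 + ε_N/(20√ν)). If ‖H⁻¹(−η₁b + g)‖_H ≤ ε_N and ‖H⁻¹g‖_H ≤ √ν, then ‖H⁻¹(−η₂b + g)‖_H ≤ 1.1·ε_N. -/

import Mathlib

open Matrix

/-- The local norm `‖x‖_H = √(xᵀ H x)`. -/
noncomputable def normH {m : ℕ} (H : Matrix (Fin m) (Fin m) ℝ) (x : Fin m → ℝ) : ℝ :=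
  Real.sqrt (x ⬝ᵥ H.mulVec x)

noncomputable def eucl {m : ℕ} (y : Fin m → ℝ) : EuclideanSpace ℝ (Fin m) :=
  (WithLp.equiv 2 _).symm y

lemma norm_eucl {m : ℕ} (y : Fin m → ℝ) : ‖eucl y‖ = Real.sqrt (y ⬝ᵥ y) := by
  rw [EuclideanSpace.norm_eq]
  congr 1
  simp [dotProduct, eucl, Real.norm_eq_abs, sq_abs, sq]

lemma eucl_sub {m : ℕ} (y z : Fin m → ℝ) : eucl (y - z) = eucl y - eucl z := rfl
lemma eucl_smul {m : ℕ} (c : ℝ) (y : Fin m → ℝ) : eucl (c • y) = c • eucl y := rfl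

open scoped MatrixOrder in
lemma normH_eq {m : ℕ} (H : Matrix (Fin m) (Fin m) ℝ) (hH : H.PosDef) (x : Fin m → ℝ) :
    normH H x = ‖eucl (CFC.sqrt H *ᵥ x)‖ := by
  set S := CFC.sqrt H with hS
  have hsym : S.transpose = S := by
    have := (CFC.sqrt_nonneg H).posSemidef.isHermitian
    simpa [Matrix.IsHermitian] using this
  rw [norm_eucl, normH]
  congr 1
  conv_lhs => rw [← CFC.sqrt_mul_sqrt_self H hH.posSemidef.nonneg]
  rw [← Matrix.mulVec_mulVec, Matrix.dotProduct_mulVec, ← Matrix.mulVec_transpose, hsym]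

open scoped MatrixOrder in
theorem stmt_11 {m : ℕ} (H : Matrix (Fin m) (Fin m) ℝ) (hH : H.PosDef)
    (b g : Fin m → ℝ) (ν εN η₁ η₂ : ℝ)
    (hν : 1 ≤ ν) (hεN0 : 0 < εN) (hεN : εN ≤ 0.05) (hη₁ : 0 < η₁)
    (hη₂ : η₂ = η₁ * (1 + εN / (20 * Real.sqrt ν)))
    (h1 : normH H (H⁻¹.mulVec ((-η₁) • b + g)) ≤ εN)
    (h2 : normH H (H⁻¹.mulVec g) ≤ Real.sqrt ν) :
    normH H (H⁻¹.mulVec ((-η₂) • b + g)) ≤ 1.1 * εN := by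
  have hsν : 1 ≤ Real.sqrt ν := by
    rw [show (1:ℝ) = Real.sqrt 1 by simp]
    exact Real.sqrt_le_sqrt hν
  set δ := εN / (20 * Real.sqrt ν) with hδ
  have hδ0 : 0 < δ := div_pos hεN0 (by positivity)
  have hδν : δ * Real.sqrt ν = εN / 20 := by
    field_simp [hδ]
    rw [hδ]; field_simp [ne_of_gt (show (0:ℝ) < Real.sqrt ν by linarith)]
  have hδle : δ ≤ εN / 20 := by
    rw [hδ]
    rw [div_le_div_iff₀ (by positivity) (by norm_num)]
    nlinarith [hεN0.le, hsν]
  have key : (-η₂) • b + g = (1+δ) • ((-η₁) • b + g) - δ • g := by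
    rw [hη₂]; ext i; simp only [Pi.add_apply, Pi.sub_apply, Pi.smul_apply, smul_eq_mul]
    ring
  have hlin : H⁻¹.mulVec ((-η₂) • b + g)
      = (1+δ) • H⁻¹.mulVec ((-η₁) • b + g) - δ • H⁻¹.mulVec g := by
    rw [key, Matrix.mulVec_sub, Matrix.mulVec_smul, Matrix.mulVec_smul]
  rw [normH_eq H hH] at h1 h2 ⊢
  rw [hlin, Matrix.mulVec_sub, Matrix.mulVec_smul, Matrix.mulVec_smul, eucl_sub,
    eucl_smul, eucl_smul]
  calc ‖(1+δ) • eucl (CFC.sqrt H *ᵥ H⁻¹.mulVec ((-η₁) • b + g))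
        - δ • eucl (CFC.sqrt H *ᵥ H⁻¹.mulVec g)‖
      ≤ (1+δ) * εN + δ * Real.sqrt ν := by
        apply le_trans (norm_sub_le _ _)
        rw [norm_smul, norm_smul, Real.norm_eq_abs, Real.norm_eq_abs,
          abs_of_pos (by linarith), abs_of_pos hδ0]
        gcongr
    _ ≤ 1.1 * εN := by
        rw [hδν]
        nlinarith [hδle, hεN0.le]
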